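/- Let G be a split graph with split partition K ⊎ S and with no universal vertex. If the auxiliary graph G^K contains a witnessed induced subgraph isomorphic to a minimal non-interval graph F (a hole, long claw, whipping top, † graph, or ‡ graph), then G^K contains a witnessed induced subgraph isomorphic to F all of whose simplicial vertices belong to S. -/

import Mathlib

namespace CAG

variable {V : Type*}

/-- The circle on which circular-arc models live. -/
abbrev Circle : Type := AddCircle (1 : ℝ)

/-- The closed arc of the circle starting at `s` and going a length `ℓ` in the
positive direction. -/
def circleArc (s ℓ : ℝ) : Set Circle :=
  (fun x : ℝ => (x : Circle)) '' Set.Icc s (s + ℓ)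

/-- A circular-arc model of a graph `G`: an assignment of nonempty closed arcs of the
circle to vertices such that two distinct vertices are adjacent iff their arcs meet. -/
structure CircularArcModel (G : SimpleGraph V) where
  arc : V → Set Circle
  isArc : ∀ v : V, ∃ s ℓ : ℝ, 0 ≤ ℓ ∧ arc v = circleArc s ℓ
  adj_iff : ∀ u v : V, u ≠ v → (G.Adj u v ↔ (arc u ∩ arc v).Nonempty)

/-- A graph is a circular-arc graph if it has a circular-arc model. -/
def IsCircularArcGraph (G : SimpleGraph V) : Prop := Nonempty (CircularArcModel G)

/-- An interval model of a graph `G`: an assignment of nonempty closed real intervals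
to vertices such that two distinct vertices are adjacent iff their intervals meet. -/
structure IntervalModel (G : SimpleGraph V) where
  lo : V → ℝ
  hi : V → ℝ
  lo_le_hi : ∀ v : V, lo v ≤ hi v
  adj_iff : ∀ u v : V, u ≠ v →
    (G.Adj u v ↔ (Set.Icc (lo u) (hi u) ∩ Set.Icc (lo v) (hi v)).Nonempty)

/-- The interval assigned to a vertex by an interval model. -/
def IntervalModel.ival {G : SimpleGraph V} (M : IntervalModel G) (v : V) : Set ℝ :=
  Set.Icc (M.lo v) (M.hi v)

/-- A graph is an interval graph if it has an interval model. -/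
def IsIntervalGraph (G : SimpleGraph V) : Prop := Nonempty (IntervalModel G)

/-- The closed neighbourhood `N[v]` of a vertex. -/
def closedNbhd (G : SimpleGraph V) (v : V) : Set V := insert v (G.neighborSet v)

/-- A vertex is simplicial if its closed neighbourhood is a clique. -/
def IsSimplicial (G : SimpleGraph V) (v : V) : Prop := G.IsClique (closedNbhd G v)

/-- The cycle graph on `n` vertices. -/
def cycleG (n : ℕ) : SimpleGraph (Fin n) :=
  SimpleGraph.fromRel (fun a b => (a.val + 1) % n = b.val)

/-- `G` contains an induced copy of `F`. -/
def InducedCopy {W : Type*} (F : SimpleGraph W) (G : SimpleGraph V) : Prop :=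
  Nonempty (F ↪g G)

/-- A graph is chordal if it has no induced cycle of length at least 4. -/
def Chordal (G : SimpleGraph V) : Prop :=
  ∀ n : ℕ, 4 ≤ n → ¬ InducedCopy (cycleG n) G

/-- The adjacency relation of the auxiliary graph `G^K`. -/
def auxAdj (G : SimpleGraph V) (K : Set V) (u v : V) : Prop :=
  (u ∈ K ∧ v ∈ K ∧ G.neighborSet u ∪ G.neighborSet v ≠ Set.univ) ∨
  (u ∉ K ∧ v ∉ K ∧ G.Adj u v) ∨
  (u ∈ K ∧ v ∉ K ∧ ¬ closedNbhd G v ⊆ closedNbhd G u) ∨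
  (v ∈ K ∧ u ∉ K ∧ ¬ closedNbhd G u ⊆ closedNbhd G v)

/-- The auxiliary graph `G^K` associated with a graph `G` and a clique `K`. -/
def auxGraph (G : SimpleGraph V) (K : Set V) : SimpleGraph V where
  Adj u v := u ≠ v ∧ auxAdj G K u v
  symm := ⟨by
    rintro u v ⟨hne, h⟩
    refine ⟨hne.symm, ?_⟩
    rcases h with ⟨h1, h2, h3⟩ | ⟨h1, h2, h3⟩ | ⟨h1, h2, h3⟩ | ⟨h1, h2, h3⟩
    · exact Or.inl ⟨h2, h1, by rwa [Set.union_comm]⟩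
    · exact Or.inr <| Or.inl ⟨h2, h1, h3.symm⟩
    · exact Or.inr <| Or.inr <| Or.inr ⟨h1, h2, h3⟩
    · exact Or.inr <| Or.inr <| Or.inl ⟨h1, h2, h3⟩⟩
  loopless := ⟨fun _ h => h.1 rfl⟩

/-- Condition (♯): `G^K` admits an interval model in which, for every `v ∈ K` and
`u ∉ K`, the interval of `v` contains the interval of `u` iff `u` and `v` are not
adjacent in `G`. -/
def SatisfiesSharp (G : SimpleGraph V) (K : Set V) : Prop :=
  ∃ M : IntervalModel (auxGraph G K),
    ∀ v ∈ K, ∀ u ∉ K, (M.ival u ⊆ M.ival v ↔ ¬ G.Adj v u)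

/-- An independent set of a graph. -/
def IsIndependentSet (G : SimpleGraph V) (s : Set V) : Prop :=
  ∀ ⦃u⦄, u ∈ s → ∀ ⦃v⦄, v ∈ s → u ≠ v → ¬ G.Adj u v

/-- A split partition: a partition of the vertex set into a clique and an independent set. -/
def IsSplitPartition (G : SimpleGraph V) (K S : Set V) : Prop :=
  K ∪ S = Set.univ ∧ Disjoint K S ∧ G.IsClique K ∧ IsIndependentSet G S

/-- A split graph. -/
def IsSplitGraph (G : SimpleGraph V) : Prop := ∃ K S : Set V, IsSplitPartition G K S

/-- A split graph is ambiguous if it has two distinct split partitions. -/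
def Ambiguous (G : SimpleGraph V) : Prop :=
  ∃ K₁ S₁ K₂ S₂ : Set V, IsSplitPartition G K₁ S₁ ∧ IsSplitPartition G K₂ S₂ ∧
    (K₁, S₁) ≠ (K₂, S₂)

/-- A maximal clique (as a set of vertices). -/
def IsMaxCliqueSet (G : SimpleGraph V) (C : Set V) : Prop :=
  G.IsClique C ∧ ∀ C' : Set V, G.IsClique C' → C ⊆ C' → C = C'

/-- A Helly circular-arc graph: one admitting a circular-arc model in which the arcs of
every maximal clique have a common point. -/
def IsHellyCircularArcGraph (G : SimpleGraph V) : Prop :=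
  ∃ M : CircularArcModel G, ∀ C : Set V, IsMaxCliqueSet G C →
    ∃ p : Circle, ∀ v ∈ C, p ∈ M.arc v

/-- The edge `ab` lies on an induced 4-cycle. -/
def EdgeOnInducedC4 (G : SimpleGraph V) (a b : V) : Prop :=
  ∃ c d : V, a ≠ c ∧ b ≠ d ∧ G.Adj a b ∧ G.Adj b c ∧ G.Adj c d ∧ G.Adj d a ∧
    ¬ G.Adj a c ∧ ¬ G.Adj b d

/-- A normalized circular-arc model. -/
def IsNormalized {G : SimpleGraph V} (M : CircularArcModel G) : Prop :=
  ∀ v₁ v₂ : V, G.Adj v₁ v₂ →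
    (closedNbhd G v₂ ⊆ closedNbhd G v₁ → M.arc v₂ ⊆ M.arc v₁) ∧
    (G.neighborSet v₁ ∪ G.neighborSet v₂ = Set.univ → ¬ EdgeOnInducedC4 G v₁ v₂ →
      M.arc v₁ ∪ M.arc v₂ = Set.univ)

/-- A universal vertex: a vertex adjacent to all other vertices. -/
def HasUniversalVertex (G : SimpleGraph V) : Prop :=
  ∃ v : V, ∀ u : V, u ≠ v → G.Adj v u

/-- `w` is a witness of the set `X ⊆ K`: a vertex of `S` adjacent in `G^K` to all of `X`. -/
def WitnessOf (G : SimpleGraph V) (K S : Set V) (w : V) (X : Set V) : Prop :=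
  w ∈ S ∧ ∀ x ∈ X, (auxGraph G K).Adj w x

/-- A set `X` is witnessed if it has a witness. -/
def Witnessed (G : SimpleGraph V) (K S : Set V) (X : Set V) : Prop :=
  ∃ w : V, WitnessOf G K S w X

/-- The induced subgraph of `G^K` on the vertex set `F` is witnessed: every maximal
clique of this subgraph that is disjoint from `S` is witnessed. -/
def WitnessedCopy (G : SimpleGraph V) (K S F : Set V) : Prop :=
  ∀ C ⊆ F, (auxGraph G K).IsClique C →
    (∀ C' ⊆ F, (auxGraph G K).IsClique C' → C ⊆ C' → C = C') →
    Disjoint C S → Witnessed G K S C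

/-- The sun: a triangle 0,1,2 together with degree-two vertices 3 (adjacent to 0,1),
4 (adjacent to 1,2) and 5 (adjacent to 0,2). -/
def sunF : SimpleGraph (Fin 6) :=
  SimpleGraph.fromRel (fun a b =>
    (a = 0 ∧ b = 1) ∨ (a = 0 ∧ b = 2) ∨ (a = 1 ∧ b = 2) ∨
    (a = 3 ∧ (b = 0 ∨ b = 1)) ∨ (a = 4 ∧ (b = 1 ∨ b = 2)) ∨ (a = 5 ∧ (b = 0 ∨ b = 2)))

/-- The long claw: centre 0 adjacent to 1,2,3; pendant vertices 4,5,6 attached to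
1,2,3 respectively. -/
def longClaw : SimpleGraph (Fin 7) :=
  SimpleGraph.fromRel (fun a b =>
    (a = 0 ∧ (b = 1 ∨ b = 2 ∨ b = 3)) ∨ (a = 1 ∧ b = 4) ∨ (a = 2 ∧ b = 5) ∨ (a = 3 ∧ b = 6))

/-- The whipping top, with vertices v0 = 0, v1 = 1, v2 = 2, v3 = 3, x1 = 4, x2 = 5,
x3 = 6: the path x1-v1-v2-v3-x3, with v0 adjacent to x1, v1, v2, v3, x3 and x2
adjacent exactly to v2. -/
def whippingTop : SimpleGraph (Fin 7) :=
  SimpleGraph.fromRel (fun a b =>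
    (a = 4 ∧ b = 1) ∨ (a = 1 ∧ b = 2) ∨ (a = 2 ∧ b = 3) ∨ (a = 3 ∧ b = 6) ∨
    (a = 0 ∧ (b = 4 ∨ b = 1 ∨ b = 2 ∨ b = 3 ∨ b = 6)) ∨ (a = 5 ∧ b = 2))

/-- The † graph on `p + 4` vertices: an induced path `v_1 … v_p` (the `inl` vertices),
a vertex `u0 = inr 0` adjacent to all `v_i`, and vertices `x1 = inr 1`, `x2 = inr 2`,
`x3 = inr 3` adjacent exactly to `v_1`, `u0`, `v_p` respectively. -/
def dagGraph (p : ℕ) : SimpleGraph (Fin p ⊕ Fin 4) :=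
  SimpleGraph.fromRel (fun a b =>
    match a, b with
    | Sum.inl i, Sum.inl j => j.val = i.val + 1
    | Sum.inr u, Sum.inl j => u = 0 ∨ (u = 1 ∧ j.val = 0) ∨ (u = 3 ∧ j.val + 1 = p)
    | Sum.inr u, Sum.inr w => u = 0 ∧ w = 2
    | _, _ => False)

/-- The ‡ graph on `p + 5` vertices: an induced path `v_1 … v_p` (the `inl` vertices),
adjacent vertices `u1 = inr 0` and `u2 = inr 1` each adjacent to all `v_i`, and
vertices `x1 = inr 2` (adjacent exactly to `v_1, u1`), `x2 = inr 3` (adjacent exactly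
to `u1, u2`) and `x3 = inr 4` (adjacent exactly to `v_p, u2`). -/
def ddagGraph (p : ℕ) : SimpleGraph (Fin p ⊕ Fin 5) :=
  SimpleGraph.fromRel (fun a b =>
    match a, b with
    | Sum.inl i, Sum.inl j => j.val = i.val + 1
    | Sum.inr u, Sum.inl j =>
        u = 0 ∨ u = 1 ∨ (u = 2 ∧ j.val = 0) ∨ (u = 4 ∧ j.val + 1 = p)
    | Sum.inr u, Sum.inr w =>
        (u = 0 ∧ w = 1) ∨ (u = 2 ∧ w = 0) ∨ (u = 3 ∧ (w = 0 ∨ w = 1)) ∨ (u = 4 ∧ w = 1)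
    | _, _ => False)

/-- A graph is a minimal non-interval graph iff it is isomorphic to a hole, the long
claw, the whipping top, a † graph, or a ‡ graph. -/
def IsMinimalNonIntervalGraph {W : Type*} (F : SimpleGraph W) : Prop :=
  (∃ n : ℕ, 4 ≤ n ∧ Nonempty (F ≃g cycleG n)) ∨
  Nonempty (F ≃g longClaw) ∨
  Nonempty (F ≃g whippingTop) ∨
  (∃ p : ℕ, 2 ≤ p ∧ Nonempty (F ≃g dagGraph p)) ∨
  (∃ p : ℕ, 1 ≤ p ∧ Nonempty (F ≃g ddagGraph p))

/-- The `k`-sun: the `inl` vertices form a clique (the even-numbered vertices of the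
cycle of length `2k`), the `inr` vertices are independent, and `inr j` is adjacent to
`inl j` and `inl ((j+1) mod k)`. -/
def sunGraph (k : ℕ) : SimpleGraph (Fin k ⊕ Fin k) :=
  SimpleGraph.fromRel (fun a b =>
    match a, b with
    | Sum.inl _, Sum.inl _ => True
    | Sum.inl i, Sum.inr j => i = j ∨ i.val = (j.val + 1) % k
    | _, _ => False)

/-- The graph `\overline{S_k}^+`: the complement of the `k`-sun together with a new
vertex (`none`) adjacent exactly to the `k` vertices forming a clique in the
complement (the `inr` vertices). -/
def sunComplPlus (k : ℕ) : SimpleGraph (Option (Fin k ⊕ Fin k)) :=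
  SimpleGraph.fromRel (fun a b =>
    match a, b with
    | some x, some y => (sunGraph k)ᶜ.Adj x y
    | some (Sum.inr _), none => True
    | _, _ => False)

/-- The graph `S^1_k`: the disjoint union of a sun and the gadget `D_k`, with two
triangle vertices of the sun identified with `v_1` and `v_k` of the gadget, plus all
edges between `{v_2, …, v_{k-1}}` and the four remaining sun vertices.  Here the
`inl` vertices are the gadget clique `v_1 … v_k` (0-based), `inr (inl a)` is the
gadget independent vertex `w_{a+1}`, and `inr (inr t)` for `t = 0,1,2,3` are the
third triangle vertex, and the three degree-two sun vertices adjacent (in the sun) to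
`{v_1,v_k}`, `{v_1,t}`, `{v_k,t}` respectively. -/
def S1 (k : ℕ) : SimpleGraph (Fin k ⊕ (Fin (k - 1) ⊕ Fin 4)) :=
  SimpleGraph.fromRel (fun x y =>
    match x, y with
    | Sum.inl _, Sum.inl _ => True
    | Sum.inr (Sum.inl a), Sum.inl b => b.val ≠ a.val ∧ b.val ≠ a.val + 1
    | Sum.inr (Sum.inr t), Sum.inl b =>
        t = 0 ∨ t = 1 ∨ (t = 2 ∧ b.val + 1 ≠ k) ∨ (t = 3 ∧ b.val ≠ 0)
    | Sum.inr (Sum.inr t), Sum.inr (Sum.inr t') => t = 0 ∧ (t' = 2 ∨ t' = 3)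
    | _, _ => False)

/-- The graph `S^2_k`: the disjoint union of a rising sun and the gadget `D_k`, with
the two degree-five vertices of the rising sun identified with `v_1` and `v_k` of the
gadget, plus all edges between `{v_2, …, v_{k-1}}` and the five remaining rising-sun
vertices.  Here the `inl` vertices are the gadget clique `v_1 … v_k` (0-based),
`inr (inl a)` is the gadget independent vertex `w_{a+1}`, and `inr (inr t)` for
`t = 0,…,4` are `d1`, `d2`, `x1`, `x2`, `x3` of the rising sun. -/
def S2 (k : ℕ) : SimpleGraph (Fin k ⊕ (Fin (k - 1) ⊕ Fin 5)) :=
  SimpleGraph.fromRel (fun x y =>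
    match x, y with
    | Sum.inl _, Sum.inl _ => True
    | Sum.inr (Sum.inl a), Sum.inl b => b.val ≠ a.val ∧ b.val ≠ a.val + 1
    | Sum.inr (Sum.inr t), Sum.inl b =>
        t = 0 ∨ t = 1 ∨ (t = 2 ∧ b.val + 1 ≠ k) ∨ t = 3 ∨ (t = 4 ∧ b.val ≠ 0)
    | Sum.inr (Sum.inr t), Sum.inr (Sum.inr t') =>
        (t = 0 ∧ t' = 1) ∨ (t = 0 ∧ t' = 2) ∨ (t = 1 ∧ t' = 4)
    | _, _ => False)

/-- The graph `F1` on 10 vertices: a clique `{0,1,2,3}` (= `v0,…,v3`), vertices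
`x1 = 4, x2 = 5, x3 = 6` where `x_i` is adjacent exactly to `v0` and the two `v_j`
with `j ∈ {1,2,3} \ {i}`, and vertices `w1 = 7, w2 = 8, w3 = 9` where `w_i` is
adjacent exactly to the two `v_j` with `j ∈ {1,2,3} \ {i}`. -/
def F1 : SimpleGraph (Fin 10) :=
  SimpleGraph.fromRel (fun a b =>
    (a.val < 4 ∧ b.val < 4) ∨
    (a = 4 ∧ (b = 0 ∨ b = 2 ∨ b = 3)) ∨
    (a = 5 ∧ (b = 0 ∨ b = 1 ∨ b = 3)) ∨
    (a = 6 ∧ (b = 0 ∨ b = 1 ∨ b = 2)) ∨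
    (a = 7 ∧ (b = 2 ∨ b = 3)) ∨
    (a = 8 ∧ (b = 1 ∨ b = 3)) ∨
    (a = 9 ∧ (b = 1 ∨ b = 2)))

/-- The graph `F2` on 9 vertices: a clique `{0,1,2,3}` (= `v0,…,v3`) together with
`x1 = 4` adjacent exactly to `v2, v3`; `x2 = 5` adjacent exactly to `v0, v1, v3`;
`x3 = 6` adjacent exactly to `v1, v2`; `w1 = 7` adjacent exactly to `v3`; and
`w2 = 8` adjacent exactly to `v1`. -/
def F2 : SimpleGraph (Fin 9) :=
  SimpleGraph.fromRel (fun a b =>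
    (a.val < 4 ∧ b.val < 4) ∨
    (a = 4 ∧ (b = 2 ∨ b = 3)) ∨
    (a = 5 ∧ (b = 0 ∨ b = 1 ∨ b = 3)) ∨
    (a = 6 ∧ (b = 1 ∨ b = 2)) ∨
    (a = 7 ∧ b = 3) ∨
    (a = 8 ∧ b = 1))

/-- The net plus an isolated vertex: triangle `0,1,2`, pendant vertices `3,4,5`
attached to `0,1,2` respectively, and an isolated vertex `6`. -/
def netStar : SimpleGraph (Fin 7) :=
  SimpleGraph.fromRel (fun a b =>
    (a = 0 ∧ b = 1) ∨ (a = 0 ∧ b = 2) ∨ (a = 1 ∧ b = 2) ∨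
    (a = 3 ∧ b = 0) ∨ (a = 4 ∧ b = 1) ∨ (a = 5 ∧ b = 2))

/-- The graph `W`: the complement of the 4-sun — a clique `0,1,2,3` (= `v1,…,v4`)
plus an independent set `4,5,6,7` (= `u1,…,u4`) with `u_i` adjacent exactly to `v_i`
and `v_{i+1 mod 4}` — together with a new vertex `8` adjacent exactly to `v1 = 0` and
`v3 = 2`. -/
def Wgraph : SimpleGraph (Fin 9) :=
  SimpleGraph.fromRel (fun a b =>
    (a.val < 4 ∧ b.val < 4) ∨
    (4 ≤ a.val ∧ a.val ≤ 7 ∧ (b.val = a.val - 4 ∨ b.val = (a.val - 4 + 1) % 4)) ∨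
    (a = 8 ∧ (b = 0 ∨ b = 2)))

/-- A clique path of a graph `H`: a linear ordering `K_1, …, K_len` of all maximal
cliques of `H` such that for every vertex the cliques containing it are consecutive.
Indices outside `[1, len]` carry the empty set (sentinels). -/
structure CliquePath (H : SimpleGraph V) where
  len : ℕ
  Kc : ℕ → Set V
  sentinel : ∀ i : ℕ, (i = 0 ∨ len < i) → Kc i = ∅
  maxclique : ∀ i : ℕ, 1 ≤ i → i ≤ len → IsMaxCliqueSet H (Kc i)
  surj : ∀ C : Set V, IsMaxCliqueSet H C → ∃ i, 1 ≤ i ∧ i ≤ len ∧ Kc i = C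
  inj : ∀ i j : ℕ, 1 ≤ i → i ≤ len → 1 ≤ j → j ≤ len → Kc i = Kc j → i = j
  consec : ∀ (v : V) (i j k : ℕ), i ≤ j → j ≤ k → v ∈ Kc i → v ∈ Kc k → v ∈ Kc j

/-- A module of a graph: every vertex outside is adjacent to all of it or none of it. -/
def GraphModule (H : SimpleGraph V) (M : Set V) : Prop :=
  ∀ u ∈ M, ∀ v ∈ M, ∀ x ∉ M, (H.Adj x u ↔ H.Adj x v)

/-- A graph is quasi-prime if every nontrivial module is a clique. -/
def QuasiPrime (H : SimpleGraph V) : Prop :=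
  ∀ M : Set V, GraphModule H M → M ≠ Set.univ → ¬ M.Subsingleton → H.IsClique M

/-! ### Auxiliary material for Statement 9 -/

section Statement9Aux

/-- Every neighbour `y` of a simplicial vertex `x` has a neighbour outside the closed
neighbourhood of `x`.  This holds for every minimal non-interval graph. -/
def PropP {W : Type*} (F : SimpleGraph W) : Prop :=
  ∀ x y : W, IsSimplicial F x → F.Adj x y → ∃ z : W, F.Adj y z ∧ ¬ F.Adj x z ∧ z ≠ x

variable {G : SimpleGraph V} {K S : Set V}

lemma IsSplitPartition.mem_or (h : IsSplitPartition G K S) (v : V) : v ∈ K ∨ v ∈ S := by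
  have hv : v ∈ K ∪ S := h.1 ▸ Set.mem_univ v
  exact hv

lemma aux_adj_KS (h : IsSplitPartition G K S) {k s : V} (hk : k ∈ K) (hs : s ∈ S) :
    (auxGraph G K).Adj k s ↔ ¬ G.Adj k s := by
  obtain ⟨hu, hd, hclK, hindS⟩ := h
  have hsK : s ∉ K := fun hsk => (hd.ne_of_mem hsk hs) rfl
  have hne : k ≠ s := hd.ne_of_mem hk hs
  constructor
  · rintro ⟨-, h1 | h2 | h3 | h4⟩
    · exact absurd h1.2.1 hsK
    · exact absurd hk h2.1
    · intro hadj
      apply h3.2.2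
      intro t htm
      simp only [closedNbhd, Set.mem_insert_iff, SimpleGraph.mem_neighborSet] at htm ⊢
      rcases htm with rfl | hst
      · exact Or.inr hadj
      · rcases (show t ∈ K ∪ S from hu ▸ Set.mem_univ t) with htK | htS
        · by_cases hkt : t = k
          · exact Or.inl hkt
          · exact Or.inr (hclK hk htK (Ne.symm hkt))
        · exact absurd hst (hindS hs htS hst.ne)
    · exact absurd h4.1 hsK
  · intro hnadj
    refine ⟨hne, Or.inr (Or.inr (Or.inl ⟨hk, hsK, fun hsub => ?_⟩))⟩
    have h' := hsub (show s ∈ closedNbhd G s from Set.mem_insert s _)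
    simp only [closedNbhd, Set.mem_insert_iff, SimpleGraph.mem_neighborSet] at h'
    rcases h' with h' | h'
    · exact hne h'.symm
    · exact hnadj h'

lemma aux_not_adj_SS (h : IsSplitPartition G K S) {s t : V} (hs : s ∈ S) (ht : t ∈ S) :
    ¬ (auxGraph G K).Adj s t := by
  obtain ⟨hu, hd, hclK, hindS⟩ := h
  have hsK : s ∉ K := fun hsk => (hd.ne_of_mem hsk hs) rfl
  have htK : t ∉ K := fun htk => (hd.ne_of_mem htk ht) rfl
  rintro ⟨hne, h1 | h2 | h3 | h4⟩
  · exact hsK h1.1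
  · exact hindS hs ht hne h2.2.2
  · exact hsK h3.1
  · exact htK h4.1

lemma union_univ_of_not_aux_adj {a b : V} (ha : a ∈ K) (hb : b ∈ K) (hne : a ≠ b)
    (hn : ¬ (auxGraph G K).Adj a b) : G.neighborSet a ∪ G.neighborSet b = Set.univ := by
  by_contra hne2
  exact hn ⟨hne, Or.inl ⟨ha, hb, hne2⟩⟩

lemma step_lemma {W : Type*} [Fintype V] (hKS : IsSplitPartition G K S)
    {F : SimpleGraph W} (hP : PropP F) (f : F ↪g auxGraph G K)
    (hf : WitnessedCopy G K S (Set.range f))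
    {x : W} (hx : IsSimplicial F x) (hxK : f x ∈ K) :
    ∃ g : F ↪g auxGraph G K, WitnessedCopy G K S (Set.range g) ∧
      g x ∈ S ∧ ∀ w : W, w ≠ x → g w = f w := by
  classical
  have hmemKS := hKS.mem_or
  have hd : Disjoint K S := hKS.2.1
  have hmemcn : ∀ z : W, z ∈ closedNbhd F x ↔ (z = x ∨ F.Adj x z) := by
    intro z
    simp [closedNbhd, Set.mem_insert_iff, SimpleGraph.mem_neighborSet]
  -- every neighbour of `x` is mapped into `K`
  have nbrK : ∀ y : W, F.Adj x y → f y ∈ K := by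
    intro y hxy
    by_contra hyK
    have hyS : f y ∈ S := (hmemKS (f y)).resolve_left hyK
    obtain ⟨z, hyz, hxz, hzx⟩ := hP x y hx hxy
    have hadjyz : (auxGraph G K).Adj (f y) (f z) := f.map_adj_iff.2 hyz
    have hzK : f z ∈ K := by
      rcases hmemKS (f z) with h | h
      · exact h
      · exact absurd hadjyz (aux_not_adj_SS hKS hyS h)
    have hA : ¬ G.Adj (f z) (f y) := (aux_adj_KS hKS hzK hyS).1 hadjyz.symm
    have hB : ¬ G.Adj (f x) (f y) := (aux_adj_KS hKS hxK hyS).1 (f.map_adj_iff.2 hxy)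
    have hne : f x ≠ f z := fun h => hzx (f.injective h).symm
    have hnadj : ¬ (auxGraph G K).Adj (f x) (f z) := fun h => hxz (f.map_adj_iff.1 h)
    have huniv := union_univ_of_not_aux_adj hxK hzK hne hnadj
    have hy2 : f y ∈ G.neighborSet (f x) ∪ G.neighborSet (f z) := huniv ▸ Set.mem_univ _
    rcases hy2 with h | h
    · exact hB h
    · exact hA h
  -- the image of the closed neighbourhood of `x` is a witnessed maximal clique
  set C0 : Set V := f '' closedNbhd F x with hC0
  have hC0K : C0 ⊆ K := by
    rintro - ⟨z, hz, rfl⟩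
    rcases (hmemcn z).1 hz with rfl | h
    · exact hxK
    · exact nbrK z h
  have hC0clique : (auxGraph G K).IsClique C0 := by
    rintro - ⟨a, ha, rfl⟩ - ⟨b, hb, rfl⟩ hne
    exact f.map_adj_iff.2 (hx ha hb (fun h => hne (congrArg f h)))
  have hxmem : f x ∈ C0 := ⟨x, (hmemcn x).2 (Or.inl rfl), rfl⟩
  have hC0max : ∀ C' : Set V, C' ⊆ Set.range f → (auxGraph G K).IsClique C' →
      C0 ⊆ C' → C0 = C' := by
    intro C' hC'sub hC'cl hsub
    refine Set.Subset.antisymm hsub ?_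
    intro u huC'
    obtain ⟨z, rfl⟩ := hC'sub huC'
    by_cases hzx : z = x
    · exact hzx ▸ hxmem
    · have hadj : (auxGraph G K).Adj (f z) (f x) :=
        hC'cl huC' (hsub hxmem) (fun h => hzx (f.injective h))
      exact ⟨z, (hmemcn z).2 (Or.inr (f.map_adj_iff.1 hadj).symm), rfl⟩
  obtain ⟨w, hwS, hwadj⟩ :=
    hf C0 (by rintro - ⟨z, hz, rfl⟩; exact Set.mem_range_self z) hC0clique hC0max
      (hd.mono_left hC0K)
  have hwadjx : (auxGraph G K).Adj w (f x) := hwadj _ hxmem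
  -- `w` is non-adjacent to the images of the non-neighbours of `x`
  have hwnadj : ∀ b : W, b ≠ x → ¬ F.Adj x b → ¬ (auxGraph G K).Adj w (f b) := by
    intro b hbx hnadj
    rcases hmemKS (f b) with hbK | hbS
    · have hneq : f x ≠ f b := fun h => hbx (f.injective h).symm
      have huniv := union_univ_of_not_aux_adj hxK hbK hneq
        (fun h => hnadj (f.map_adj_iff.1 h))
      have hwG : ¬ G.Adj (f x) w := (aux_adj_KS hKS hxK hwS).1 hwadjx.symm
      have hw2 : w ∈ G.neighborSet (f x) ∪ G.neighborSet (f b) := huniv ▸ Set.mem_univ _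
      rcases hw2 with h | h
      · exact absurd h hwG
      · intro h2
        exact (aux_adj_KS hKS hbK hwS).1 h2.symm h
    · exact aux_not_adj_SS hKS hwS hbS
  have hwne : ∀ b : W, b ≠ x → w ≠ f b := by
    intro b hbx heq
    have hba : F.Adj b x := f.map_adj_iff.1 (heq ▸ hwadjx)
    have hbK : f b ∈ K := nbrK b hba.symm
    exact hd.ne_of_mem hbK (heq ▸ hwS) rfl
  -- the modified embedding
  set gfun : W → V := fun z => if z = x then w else f z with hgfun
  have hgx : gfun x = w := if_pos rfl
  have hgother : ∀ z, z ≠ x → gfun z = f z := fun z hz => if_neg hz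
  have hginj : Function.Injective gfun := by
    intro a b hab
    by_cases ha : a = x <;> by_cases hb : b = x
    · exact ha.trans hb.symm
    · subst ha; rw [hgx, hgother b hb] at hab; exact absurd hab (hwne b hb)
    · subst hb; rw [hgx, hgother a ha] at hab; exact absurd hab.symm (hwne a ha)
    · rw [hgother a ha, hgother b hb] at hab; exact f.injective hab
  have hmri : ∀ a b : W, (auxGraph G K).Adj (gfun a) (gfun b) ↔ F.Adj a b := by
    intro a b
    by_cases ha : a = x <;> by_cases hb : b = x
    · subst ha; subst hb
      exact iff_of_false (fun h => (auxGraph G K).loopless.irrefl _ h) (fun h => F.loopless.irrefl _ h)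
    · subst ha; rw [hgx, hgother b hb]
      constructor
      · intro h
        by_contra hnadj
        exact hwnadj b hb hnadj h
      · intro h
        exact hwadj _ ⟨b, (hmemcn b).2 (Or.inr h), rfl⟩
    · subst hb; rw [hgx, hgother a ha]
      constructor
      · intro h
        by_contra hnadj
        exact hwnadj a ha (fun h2 => hnadj h2.symm) h.symm
      · intro h
        exact (hwadj _ ⟨a, (hmemcn a).2 (Or.inr h.symm), rfl⟩).symm
    · rw [hgother a ha, hgother b hb]; exact f.map_adj_iff
  let g : F ↪g auxGraph G K := ⟨⟨gfun, hginj⟩, fun {a b} => hmri a b⟩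
  have hgapp : ∀ z : W, g z = gfun z := fun z => rfl
  refine ⟨g, ?_, by rw [hgapp, hgx]; exact hwS, fun z hz => by rw [hgapp, hgother z hz]⟩
  -- the new copy is witnessed
  intro C hCsub hCcl hCmax hCS
  have hwC : w ∉ C := fun h => Set.disjoint_left.1 hCS h hwS
  have hCf : ∀ u ∈ C, ∃ z : W, z ≠ x ∧ f z = u := by
    intro u huC
    obtain ⟨z, hz⟩ := hCsub huC
    have hz' : gfun z = u := hz
    by_cases hzx : z = x
    · subst hzx; rw [hgx] at hz'; exact absurd (hz' ▸ huC) hwC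
    · exact ⟨z, hzx, (hgother z hzx).symm.trans hz'⟩
  have hCrf : C ⊆ Set.range f := fun u huC => by
    obtain ⟨z, _, hz⟩ := hCf u huC; exact ⟨z, hz⟩
  obtain ⟨D, ⟨hCD, hDrf, hDcl⟩, hDmax⟩ :=
    Set.Finite.exists_maximalFor id
      {D : Set V | C ⊆ D ∧ D ⊆ Set.range f ∧ (auxGraph G K).IsClique D}
      (Set.toFinite _) ⟨C, Set.Subset.rfl, hCrf, hCcl⟩
  by_cases hfxD : f x ∈ D
  · exfalso
    have hwD : ∀ u ∈ C, w ≠ u ∧ (auxGraph G K).Adj w u := by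
      intro u huC
      obtain ⟨z, hzx, rfl⟩ := hCf u huC
      have hne : f z ≠ f x := fun h => hzx (f.injective h)
      have hadj : (auxGraph G K).Adj (f z) (f x) := hDcl (hCD huC) hfxD hne
      have hzadj : F.Adj x z := (f.map_adj_iff.1 hadj).symm
      exact ⟨hwne z hzx, hwadj _ ⟨z, (hmemcn z).2 (Or.inr hzadj), rfl⟩⟩
    have hclins : (auxGraph G K).IsClique (insert w C) := by
      intro a ha b hb hne
      rcases ha with rfl | ha <;> rcases hb with rfl | hb
      · exact absurd rfl hne
      · exact (hwD b hb).2
      · exact ((hwD a ha).2).symm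
      · exact hCcl ha hb hne
    have heq : C = insert w C :=
      hCmax (insert w C) (Set.insert_subset ⟨x, hgx⟩ hCsub) hclins (Set.subset_insert _ _)
    exact hwC (heq.symm ▸ Set.mem_insert w C)
  · have hDrg : D ⊆ Set.range (⇑g) := by
      intro u huD
      obtain ⟨z, rfl⟩ := hDrf huD
      have hzx : z ≠ x := fun h => hfxD (h ▸ huD)
      exact ⟨z, (hgapp z).trans (hgother z hzx)⟩
    have hCD' : C = D := hCmax D hDrg hDcl hCD
    have hDmax' : ∀ C' : Set V, C' ⊆ Set.range f → (auxGraph G K).IsClique C' →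
        D ⊆ C' → D = C' := by
      intro C' h1 h2 h3
      exact Set.Subset.antisymm h3 (hDmax ⟨Set.Subset.trans hCD h3, h1, h2⟩ h3)
    have hwit : Witnessed G K S D := hf D hDrf hDcl hDmax' (hCD' ▸ hCS)
    rw [hCD']
    exact hwit

lemma isSimplicial_iff {W : Type*} (F : SimpleGraph W) (x : W) :
    IsSimplicial F x ↔
      ∀ a b : W, (a = x ∨ F.Adj x a) → (b = x ∨ F.Adj x b) → a ≠ b → F.Adj a b := by
  constructor
  · intro h a b ha hb hne
    refine h ?_ ?_ hne <;>
      simp only [closedNbhd, Set.mem_insert_iff, SimpleGraph.mem_neighborSet] <;>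
      assumption
  · intro h u hu v hv hne
    simp only [closedNbhd, Set.mem_insert_iff, SimpleGraph.mem_neighborSet] at hu hv
    exact h u v hu hv hne

lemma propP_iff {W : Type*} (F : SimpleGraph W) :
    PropP F ↔ ∀ x y : W,
      (∀ a b : W, (a = x ∨ F.Adj x a) → (b = x ∨ F.Adj x b) → a ≠ b → F.Adj a b) →
      F.Adj x y → ∃ z : W, F.Adj y z ∧ ¬ F.Adj x z ∧ z ≠ x := by
  unfold PropP
  simp only [isSimplicial_iff]

lemma isSimplicial_map {W W' : Type*} {F : SimpleGraph W} {H : SimpleGraph W'}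
    (e : F ≃g H) {x : W} (h : IsSimplicial F x) : IsSimplicial H (e x) := by
  rw [isSimplicial_iff] at h ⊢
  intro a b ha hb hne
  have key : ∀ t : W', (t = e x ∨ H.Adj (e x) t) → (e.symm t = x ∨ F.Adj x (e.symm t)) := by
    intro t ht
    rcases ht with rfl | ht
    · exact Or.inl (e.symm_apply_apply x)
    · refine Or.inr (e.map_adj_iff.1 ?_)
      rw [e.apply_symm_apply]
      exact ht
  have hne' : e.symm a ≠ e.symm b := fun hc => hne (e.symm.injective hc)
  have := h _ _ (key a ha) (key b hb) hne'
  have h2 := e.map_adj_iff.2 this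
  rwa [e.apply_symm_apply, e.apply_symm_apply] at h2

lemma propP_of_iso {W W' : Type*} {F : SimpleGraph W} {H : SimpleGraph W'}
    (e : F ≃g H) (h : PropP H) : PropP F := by
  intro x y hx hxy
  obtain ⟨z, h1, h2, h3⟩ := h (e x) (e y) (isSimplicial_map e hx) (e.map_adj_iff.2 hxy)
  refine ⟨e.symm z, ?_, ?_, ?_⟩
  · refine e.map_adj_iff.1 ?_
    rw [e.apply_symm_apply]
    exact h1
  · intro hc
    apply h2
    have := e.map_adj_iff.2 hc
    rwa [e.apply_symm_apply] at this
  · intro hc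
    apply h3
    rw [← hc, e.apply_symm_apply]

lemma cycleG_adj {n : ℕ} (a b : Fin n) :
    (cycleG n).Adj a b ↔ a ≠ b ∧ ((a.val + 1) % n = b.val ∨ (b.val + 1) % n = a.val) := by
  simp [cycleG, SimpleGraph.fromRel_adj]

lemma propP_cycle {n : ℕ} (hn : 4 ≤ n) : PropP (cycleG n) := by
  rw [propP_iff]
  intro x y hx hxy
  exfalso
  have hn0 : 0 < n := by omega
  set m := x.val with hm
  have hmlt : m < n := x.isLt
  set a : Fin n := ⟨(m + 1) % n, Nat.mod_lt _ hn0⟩ with ha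
  set b : Fin n := ⟨(m + (n - 1)) % n, Nat.mod_lt _ hn0⟩ with hb
  have ha1 : a.val = if m + 1 = n then 0 else m + 1 := by
    by_cases h : m + 1 = n
    · simp [ha, h]
    · simp [ha, h, Nat.mod_eq_of_lt (show m + 1 < n by omega)]
  have hb1 : b.val = if m = 0 then n - 1 else m - 1 := by
    by_cases h : m = 0
    · simp [hb, h, Nat.mod_eq_of_lt (show n - 1 < n by omega)]
    · have heq : m + (n - 1) = n + (m - 1) := by omega
      simp [hb, h, heq, Nat.add_mod_left, Nat.mod_eq_of_lt (show m - 1 < n by omega)]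
  have hadja : (cycleG n).Adj x a := by
    rw [cycleG_adj]
    constructor
    · intro hc
      have hcv := congrArg Fin.val hc
      rw [← hm, ha1] at hcv
      split_ifs at hcv <;> omega
    · left
      simp [ha, hm]
  have hadjb : (cycleG n).Adj x b := by
    rw [cycleG_adj]
    refine ⟨?_, Or.inr ?_⟩
    · intro hc
      have hcv := congrArg Fin.val hc
      rw [← hm, hb1] at hcv
      split_ifs at hcv <;> omega
    · rw [hb1]
      by_cases h : m = 0
      · rw [if_pos h, show n - 1 + 1 = n from by omega, Nat.mod_self]
        omega
      · rw [if_neg h, show m - 1 + 1 = m from by omega, Nat.mod_eq_of_lt hmlt]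
  have hne : a ≠ b := by
    intro hc
    have hcv := congrArg Fin.val hc
    rw [ha1, hb1] at hcv
    split_ifs at hcv <;> omega
  have hadj := hx a b (Or.inr hadja) (Or.inr hadjb) hne
  rw [cycleG_adj] at hadj
  rcases hadj.2 with h | h
  · by_cases h1 : m + 1 = n
    · rw [ha1, if_pos h1, hb1, if_neg (show ¬ m = 0 by omega),
        Nat.mod_eq_of_lt (show 0 + 1 < n by omega)] at h
      omega
    · rw [ha1, if_neg h1] at h
      by_cases h2 : m + 2 = n
      · rw [show m + 1 + 1 = n from by omega, Nat.mod_self, hb1] at h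
        split_ifs at h <;> omega
      · rw [Nat.mod_eq_of_lt (show m + 1 + 1 < n by omega), hb1] at h
        split_ifs at h <;> omega
  · by_cases h2 : m = 0
    · rw [hb1, if_pos h2, show n - 1 + 1 = n from by omega, Nat.mod_self, ha1] at h
      split_ifs at h <;> omega
    · rw [hb1, if_neg h2, show m - 1 + 1 = m from by omega,
        Nat.mod_eq_of_lt hmlt, ha1] at h
      split_ifs at h <;> omega

instance decLongClawAdj : DecidableRel longClaw.Adj := fun a b =>
  decidable_of_iff _ (SimpleGraph.fromRel_adj _ a b).symm

instance decWhippingTopAdj : DecidableRel whippingTop.Adj := fun a b =>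
  decidable_of_iff _ (SimpleGraph.fromRel_adj _ a b).symm

lemma propP_longClaw : PropP longClaw := by
  rw [propP_iff]
  decide

lemma propP_whippingTop : PropP whippingTop := by
  rw [propP_iff]
  decide

lemma dag_adj_inl_inl {p : ℕ} (i j : Fin p) :
    (dagGraph p).Adj (Sum.inl i) (Sum.inl j) ↔ j.val = i.val + 1 ∨ i.val = j.val + 1 := by
  simp [dagGraph, SimpleGraph.fromRel_adj]
  rintro (h | h) rfl <;> omega

lemma dag_adj_inr_inl {p : ℕ} (u : Fin 4) (j : Fin p) :
    (dagGraph p).Adj (Sum.inr u) (Sum.inl j) ↔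
      (u = 0 ∨ (u = 1 ∧ j.val = 0) ∨ (u = 3 ∧ j.val + 1 = p)) := by
  simp [dagGraph, SimpleGraph.fromRel_adj]

lemma dag_adj_inl_inr {p : ℕ} (j : Fin p) (u : Fin 4) :
    (dagGraph p).Adj (Sum.inl j) (Sum.inr u) ↔
      (u = 0 ∨ (u = 1 ∧ j.val = 0) ∨ (u = 3 ∧ j.val + 1 = p)) := by
  rw [SimpleGraph.adj_comm]
  exact dag_adj_inr_inl u j

lemma dag_adj_inr_inr {p : ℕ} (u w : Fin 4) :
    (dagGraph p).Adj (Sum.inr u) (Sum.inr w) ↔ ((u = 0 ∧ w = 2) ∨ (w = 0 ∧ u = 2)) := by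
  simp [dagGraph, SimpleGraph.fromRel_adj]
  rintro (⟨rfl, rfl⟩ | ⟨rfl, rfl⟩) <;> decide

lemma propP_dag {p : ℕ} (hp : 2 ≤ p) : PropP (dagGraph p) := by
  have h0p : 0 < p := by omega
  have h1p : 1 < p := by omega
  rw [propP_iff]
  intro x y hx hxy
  rcases x with i | u
  · exfalso
    by_cases h0 : i.val = 0
    · have ha : (dagGraph p).Adj (Sum.inl i) (Sum.inl ⟨1, h1p⟩) :=
        (dag_adj_inl_inl _ _).2 (Or.inl (by show 1 = i.val + 1; omega))
      have hb : (dagGraph p).Adj (Sum.inl i) (Sum.inr 1) :=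
        ((dag_adj_inr_inl 1 i).2 (Or.inr (Or.inl ⟨rfl, h0⟩))).symm
      have hcon := hx _ _ (Or.inr ha) (Or.inr hb) (by simp)
      rw [dag_adj_inl_inr] at hcon
      rcases hcon with h | ⟨-, h⟩ | ⟨h, -⟩
      · exact absurd h (by decide)
      · exact Nat.one_ne_zero h
      · exact absurd h (by decide)
    · by_cases hpe : i.val = p - 1
      · have ha : (dagGraph p).Adj (Sum.inl i) (Sum.inl ⟨p - 2, by omega⟩) :=
          (dag_adj_inl_inl _ _).2 (Or.inr (by show i.val = p - 2 + 1; omega))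
        have hb : (dagGraph p).Adj (Sum.inl i) (Sum.inr 3) :=
          (dag_adj_inl_inr _ _).2 (Or.inr (Or.inr ⟨rfl, by omega⟩))
        have hcon := hx _ _ (Or.inr ha) (Or.inr hb) (by simp)
        rw [dag_adj_inl_inr] at hcon
        rcases hcon with h | ⟨h, -⟩ | ⟨-, h⟩
        · exact absurd h (by decide)
        · exact absurd h (by decide)
        · exact absurd h (by show ¬ (p - 2 + 1 = p); omega)
      · have ha : (dagGraph p).Adj (Sum.inl i) (Sum.inl ⟨i.val - 1, by omega⟩) :=
          (dag_adj_inl_inl _ _).2 (Or.inr (by show i.val = i.val - 1 + 1; omega))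
        have hb : (dagGraph p).Adj (Sum.inl i) (Sum.inl ⟨i.val + 1, by omega⟩) :=
          (dag_adj_inl_inl _ _).2 (Or.inl (by show i.val + 1 = i.val + 1; omega))
        have hne : (Sum.inl ⟨i.val - 1, by omega⟩ : Fin p ⊕ Fin 4) ≠
            Sum.inl ⟨i.val + 1, by omega⟩ := by
          simp only [ne_eq, Sum.inl.injEq, Fin.mk.injEq]
          omega
        have hcon := hx _ _ (Or.inr ha) (Or.inr hb) hne
        rw [dag_adj_inl_inl] at hcon
        exact absurd hcon
          (by show ¬ (i.val + 1 = i.val - 1 + 1 ∨ i.val - 1 = i.val + 1 + 1); omega)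
  · fin_cases u
    · exfalso
      have ha : (dagGraph p).Adj (Sum.inr 0) (Sum.inl ⟨0, h0p⟩) :=
        (dag_adj_inr_inl _ _).2 (Or.inl rfl)
      have hb : (dagGraph p).Adj (Sum.inr (0 : Fin 4)) (Sum.inr 2) :=
        (dag_adj_inr_inr _ _).2 (Or.inl ⟨rfl, rfl⟩)
      have hcon := hx _ _ (Or.inr ha) (Or.inr hb) (by simp)
      rw [dag_adj_inl_inr] at hcon
      rcases hcon with h | ⟨h, -⟩ | ⟨h, -⟩
      · exact absurd h (by decide)
      · exact absurd h (by decide)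
      · exact absurd h (by decide)
    · rcases y with j | w
      · rw [dag_adj_inr_inl] at hxy
        rcases hxy with h | ⟨-, hj⟩ | ⟨h, -⟩
        · exact absurd h (by decide)
        · refine ⟨Sum.inl ⟨1, h1p⟩, ?_, ?_, by simp⟩
          · exact (dag_adj_inl_inl _ _).2 (Or.inl (by show 1 = j.val + 1; omega))
          · intro hc
            rw [dag_adj_inr_inl] at hc
            rcases hc with h | ⟨-, h⟩ | ⟨h, -⟩
            · exact absurd h (by decide)
            · exact Nat.one_ne_zero h
            · exact absurd h (by decide)
        · exact absurd h (by decide)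
      · exfalso
        rw [dag_adj_inr_inr] at hxy
        rcases hxy with ⟨h, -⟩ | ⟨-, h⟩
        · exact absurd h (by decide)
        · exact absurd h (by decide)
    · rcases y with j | w
      · exfalso
        rw [dag_adj_inr_inl] at hxy
        rcases hxy with h | ⟨h, -⟩ | ⟨h, -⟩
        · exact absurd h (by decide)
        · exact absurd h (by decide)
        · exact absurd h (by decide)
      · rw [dag_adj_inr_inr] at hxy
        rcases hxy with ⟨h, -⟩ | ⟨hw, -⟩
        · exact absurd h (by decide)
        · subst hw
          refine ⟨Sum.inl ⟨0, h0p⟩, ?_, ?_, by simp⟩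
          · exact (dag_adj_inr_inl _ _).2 (Or.inl rfl)
          · intro hc
            rw [dag_adj_inr_inl] at hc
            rcases hc with h | ⟨h, -⟩ | ⟨h, -⟩
            · exact absurd h (by decide)
            · exact absurd h (by decide)
            · exact absurd h (by decide)
    · rcases y with j | w
      · rw [dag_adj_inr_inl] at hxy
        rcases hxy with h | ⟨h, -⟩ | ⟨-, hj⟩
        · exact absurd h (by decide)
        · exact absurd h (by decide)
        · refine ⟨Sum.inl ⟨p - 2, by omega⟩, ?_, ?_, by simp⟩
          · exact (dag_adj_inl_inl _ _).2 (Or.inr (by show j.val = p - 2 + 1; omega))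
          · intro hc
            rw [dag_adj_inr_inl] at hc
            rcases hc with h | ⟨h, -⟩ | ⟨-, h⟩
            · exact absurd h (by decide)
            · exact absurd h (by decide)
            · exact absurd h (by show ¬ (p - 2 + 1 = p); omega)
      · exfalso
        rw [dag_adj_inr_inr] at hxy
        rcases hxy with ⟨h, -⟩ | ⟨-, h⟩
        · exact absurd h (by decide)
        · exact absurd h (by decide)

lemma ddag_adj_inl_inl {p : ℕ} (i j : Fin p) :
    (ddagGraph p).Adj (Sum.inl i) (Sum.inl j) ↔ j.val = i.val + 1 ∨ i.val = j.val + 1 := by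
  simp [ddagGraph, SimpleGraph.fromRel_adj]
  rintro (h | h) rfl <;> omega

lemma ddag_adj_inr_inl {p : ℕ} (u : Fin 5) (j : Fin p) :
    (ddagGraph p).Adj (Sum.inr u) (Sum.inl j) ↔
      (u = 0 ∨ u = 1 ∨ (u = 2 ∧ j.val = 0) ∨ (u = 4 ∧ j.val + 1 = p)) := by
  simp [ddagGraph, SimpleGraph.fromRel_adj]

lemma ddag_adj_inl_inr {p : ℕ} (j : Fin p) (u : Fin 5) :
    (ddagGraph p).Adj (Sum.inl j) (Sum.inr u) ↔
      (u = 0 ∨ u = 1 ∨ (u = 2 ∧ j.val = 0) ∨ (u = 4 ∧ j.val + 1 = p)) := by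
  rw [SimpleGraph.adj_comm]
  exact ddag_adj_inr_inl u j

lemma ddag_adj_inr_inr {p : ℕ} (u w : Fin 5) :
    (ddagGraph p).Adj (Sum.inr u) (Sum.inr w) ↔
      (((u = 0 ∧ w = 1) ∨ (u = 2 ∧ w = 0) ∨ (u = 3 ∧ (w = 0 ∨ w = 1)) ∨ (u = 4 ∧ w = 1)) ∨
       ((w = 0 ∧ u = 1) ∨ (w = 2 ∧ u = 0) ∨ (w = 3 ∧ (u = 0 ∨ u = 1)) ∨ (w = 4 ∧ u = 1))) := by
  simp only [ddagGraph, SimpleGraph.fromRel_adj, ne_eq, Sum.inr.injEq]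
  constructor
  · rintro ⟨-, h⟩
    exact h
  · intro h
    refine ⟨?_, h⟩
    revert h
    revert u w
    decide

lemma propP_ddag {p : ℕ} (hp : 1 ≤ p) : PropP (ddagGraph p) := by
  have h0p : 0 < p := by omega
  rw [propP_iff]
  intro x y hx hxy
  rcases x with i | u
  · -- the path vertices are never simplicial
    exfalso
    by_cases hp1 : p = 1
    · have ha : (ddagGraph p).Adj (Sum.inl i) (Sum.inr 2) :=
        (ddag_adj_inl_inr _ _).2 (Or.inr (Or.inr (Or.inl ⟨rfl, by omega⟩)))
      have hb : (ddagGraph p).Adj (Sum.inl i) (Sum.inr 4) :=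
        (ddag_adj_inl_inr _ _).2 (Or.inr (Or.inr (Or.inr ⟨rfl, by omega⟩)))
      have hcon := hx _ _ (Or.inr ha) (Or.inr hb) (by simp)
      rw [ddag_adj_inr_inr] at hcon
      exact absurd hcon (by decide)
    · by_cases h0 : i.val = 0
      · have ha : (ddagGraph p).Adj (Sum.inl i) (Sum.inr 2) :=
          (ddag_adj_inl_inr _ _).2 (Or.inr (Or.inr (Or.inl ⟨rfl, h0⟩)))
        have hb : (ddagGraph p).Adj (Sum.inl i) (Sum.inl ⟨1, by omega⟩) :=
          (ddag_adj_inl_inl _ _).2 (Or.inl (by show 1 = i.val + 1; omega))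
        have hcon := hx _ _ (Or.inr ha) (Or.inr hb) (by simp)
        rw [ddag_adj_inr_inl] at hcon
        rcases hcon with h | h | ⟨-, h⟩ | ⟨h, -⟩
        · exact absurd h (by decide)
        · exact absurd h (by decide)
        · exact Nat.one_ne_zero h
        · exact absurd h (by decide)
      · by_cases hpe : i.val = p - 1
        · have ha : (ddagGraph p).Adj (Sum.inl i) (Sum.inr 4) :=
            (ddag_adj_inl_inr _ _).2 (Or.inr (Or.inr (Or.inr ⟨rfl, by omega⟩)))
          have hb : (ddagGraph p).Adj (Sum.inl i) (Sum.inl ⟨p - 2, by omega⟩) :=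
            (ddag_adj_inl_inl _ _).2 (Or.inr (by show i.val = p - 2 + 1; omega))
          have hcon := hx _ _ (Or.inr ha) (Or.inr hb) (by simp)
          rw [ddag_adj_inr_inl] at hcon
          rcases hcon with h | h | ⟨h, -⟩ | ⟨-, h⟩
          · exact absurd h (by decide)
          · exact absurd h (by decide)
          · exact absurd h (by decide)
          · exact absurd h (by show ¬ (p - 2 + 1 = p); omega)
        · have ha : (ddagGraph p).Adj (Sum.inl i) (Sum.inl ⟨i.val - 1, by omega⟩) :=
            (ddag_adj_inl_inl _ _).2 (Or.inr (by show i.val = i.val - 1 + 1; omega))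
          have hb : (ddagGraph p).Adj (Sum.inl i) (Sum.inl ⟨i.val + 1, by omega⟩) :=
            (ddag_adj_inl_inl _ _).2 (Or.inl (by show i.val + 1 = i.val + 1; omega))
          have hne : (Sum.inl ⟨i.val - 1, by omega⟩ : Fin p ⊕ Fin 5) ≠
              Sum.inl ⟨i.val + 1, by omega⟩ := by
            simp only [ne_eq, Sum.inl.injEq, Fin.mk.injEq]
            omega
          have hcon := hx _ _ (Or.inr ha) (Or.inr hb) hne
          rw [ddag_adj_inl_inl] at hcon
          exact absurd hcon
            (by show ¬ (i.val + 1 = i.val - 1 + 1 ∨ i.val - 1 = i.val + 1 + 1); omega)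
  · fin_cases u
    · -- u1 is not simplicial : x1 and x2 are non-adjacent neighbours
      exfalso
      have ha : (ddagGraph p).Adj (Sum.inr (0 : Fin 5)) (Sum.inr 2) :=
        (ddag_adj_inr_inr _ _).2 (by decide)
      have hb : (ddagGraph p).Adj (Sum.inr (0 : Fin 5)) (Sum.inr 3) :=
        (ddag_adj_inr_inr _ _).2 (by decide)
      have hcon := hx _ _ (Or.inr ha) (Or.inr hb) (by simp)
      rw [ddag_adj_inr_inr] at hcon
      exact absurd hcon (by decide)
    · -- u2 is not simplicial : x2 and x3 are non-adjacent neighbours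
      exfalso
      have ha : (ddagGraph p).Adj (Sum.inr (1 : Fin 5)) (Sum.inr 3) :=
        (ddag_adj_inr_inr _ _).2 (by decide)
      have hb : (ddagGraph p).Adj (Sum.inr (1 : Fin 5)) (Sum.inr 4) :=
        (ddag_adj_inr_inr _ _).2 (by decide)
      have hcon := hx _ _ (Or.inr ha) (Or.inr hb) (by simp)
      rw [ddag_adj_inr_inr] at hcon
      exact absurd hcon (by decide)
    · -- x1 : use u2 as the vertex z
      refine ⟨Sum.inr 1, ?_, ?_, by simp⟩
      · rcases y with j | w
        · exact (ddag_adj_inl_inr _ _).2 (Or.inr (Or.inl rfl))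
        · rw [ddag_adj_inr_inr] at hxy
          rcases hxy with (⟨h, -⟩ | ⟨-, hw⟩ | ⟨h, -⟩ | ⟨h, -⟩) |
            (⟨-, h⟩ | ⟨-, h⟩ | ⟨-, (h | h)⟩ | ⟨-, h⟩)
          · exact absurd h (by decide)
          · subst hw
            exact (ddag_adj_inr_inr _ _).2 (by decide)
          · exact absurd h (by decide)
          · exact absurd h (by decide)
          · exact absurd h (by decide)
          · exact absurd h (by decide)
          · exact absurd h (by decide)
          · exact absurd h (by decide)
          · exact absurd h (by decide)
      · intro hc
        rw [ddag_adj_inr_inr] at hc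
        exact absurd hc (by decide)
    · -- x2 : use v1 as the vertex z
      refine ⟨Sum.inl ⟨0, h0p⟩, ?_, ?_, by simp⟩
      · rcases y with j | w
        · exfalso
          rw [ddag_adj_inr_inl] at hxy
          rcases hxy with h | h | ⟨h, -⟩ | ⟨h, -⟩ <;> exact absurd h (by decide)
        · rw [ddag_adj_inr_inr] at hxy
          rcases hxy with (⟨h, -⟩ | ⟨h, -⟩ | ⟨-, (hw | hw)⟩ | ⟨h, -⟩) |
            (⟨-, h⟩ | ⟨-, h⟩ | ⟨-, (h | h)⟩ | ⟨-, h⟩)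
          · exact absurd h (by decide)
          · exact absurd h (by decide)
          · subst hw
            exact (ddag_adj_inr_inl _ _).2 (Or.inl rfl)
          · subst hw
            exact (ddag_adj_inr_inl _ _).2 (Or.inr (Or.inl rfl))
          · exact absurd h (by decide)
          · exact absurd h (by decide)
          · exact absurd h (by decide)
          · exact absurd h (by decide)
          · exact absurd h (by decide)
          · exact absurd h (by decide)
      · intro hc
        rw [ddag_adj_inr_inl] at hc
        rcases hc with h | h | ⟨h, -⟩ | ⟨h, -⟩ <;> exact absurd h (by decide)
    · -- x3 : use u1 as the vertex z
      refine ⟨Sum.inr 0, ?_, ?_, by simp⟩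
      · rcases y with j | w
        · exact (ddag_adj_inl_inr _ _).2 (Or.inl rfl)
        · rw [ddag_adj_inr_inr] at hxy
          rcases hxy with (⟨h, -⟩ | ⟨h, -⟩ | ⟨h, -⟩ | ⟨-, hw⟩) |
            (⟨-, h⟩ | ⟨-, h⟩ | ⟨-, (h | h)⟩ | ⟨-, h⟩)
          · exact absurd h (by decide)
          · exact absurd h (by decide)
          · exact absurd h (by decide)
          · subst hw
            exact (ddag_adj_inr_inr _ _).2 (by decide)
          · exact absurd h (by decide)
          · exact absurd h (by decide)
          · exact absurd h (by decide)
          · exact absurd h (by decide)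
          · exact absurd h (by decide)
      · intro hc
        rw [ddag_adj_inr_inr] at hc
        exact absurd hc (by decide)

end Statement9Aux

/-- Let `G` be a split graph with split partition `K ⊎ S` and no
universal vertex.  If `G^K` contains a witnessed induced copy of a minimal
non-interval graph `F`, then it contains a witnessed induced copy of `F` all of whose
simplicial vertices belong to `S`. -/
theorem statement9 {V W : Type*} [Fintype V] [Fintype W] (G : SimpleGraph V)
    (K S : Set V) (hKS : IsSplitPartition G K S) (hu : ¬ HasUniversalVertex G)
    (F : SimpleGraph W) (hF : IsMinimalNonIntervalGraph F)
    (f : F ↪g auxGraph G K) (hf : WitnessedCopy G K S (Set.range f)) :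
    ∃ g : F ↪g auxGraph G K, WitnessedCopy G K S (Set.range g) ∧
      ∀ w : W, IsSimplicial F w → g w ∈ S := by
  classical
  have hP : PropP F := by
    rcases hF with ⟨n, hn, ⟨e⟩⟩ | he | he | ⟨p, hp2, ⟨e⟩⟩ | ⟨p, hp1, ⟨e⟩⟩
    · exact propP_of_iso e (propP_cycle hn)
    · exact propP_of_iso he.some propP_longClaw
    · exact propP_of_iso he.some propP_whippingTop
    · exact propP_of_iso e (propP_dag hp2)
    · exact propP_of_iso e (propP_ddag hp1)
  suffices H : ∀ (n : ℕ) (f : F ↪g auxGraph G K), WitnessedCopy G K S (Set.range f) →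
      (Finset.univ.filter fun w => IsSimplicial F w ∧ f w ∈ K).card ≤ n →
      ∃ g : F ↪g auxGraph G K, WitnessedCopy G K S (Set.range g) ∧
        ∀ w : W, IsSimplicial F w → g w ∈ S by
    exact H _ f hf le_rfl
  intro n
  induction n with
  | zero =>
    intro f hf hcard
    refine ⟨f, hf, fun w hw => ?_⟩
    rcases hKS.mem_or (f w) with hK | hS
    · exfalso
      have hmem : w ∈ Finset.univ.filter fun w => IsSimplicial F w ∧ f w ∈ K :=
        Finset.mem_filter.2 ⟨Finset.mem_univ w, hw, hK⟩
      have := Finset.card_pos.2 ⟨w, hmem⟩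
      omega
    · exact hS
  | succ n ih =>
    intro f hf hcard
    by_cases hex : ∃ x : W, IsSimplicial F x ∧ f x ∈ K
    · obtain ⟨x, hx, hxK⟩ := hex
      obtain ⟨g, hg, hgx, hge⟩ := step_lemma hKS hP f hf hx hxK
      refine ih g hg ?_
      have hsub : (Finset.univ.filter fun w => IsSimplicial F w ∧ g w ∈ K) ⊆
          (Finset.univ.filter fun w => IsSimplicial F w ∧ f w ∈ K).erase x := by
        intro w hw
        rw [Finset.mem_filter] at hw
        have hwx : w ≠ x := by
          rintro rfl
          exact (hKS.2.1.ne_of_mem hw.2.2 hgx) rfl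
        refine Finset.mem_erase.2
          ⟨hwx, Finset.mem_filter.2 ⟨Finset.mem_univ w, hw.2.1, ?_⟩⟩
        rw [← hge w hwx]
        exact hw.2.2
      have hxmem : x ∈ Finset.univ.filter fun w => IsSimplicial F w ∧ f w ∈ K :=
        Finset.mem_filter.2 ⟨Finset.mem_univ x, hx, hxK⟩
      have h1 := Finset.card_le_card hsub
      have h2 := Finset.card_erase_of_mem hxmem
      have h3 := Finset.card_pos.2 ⟨x, hxmem⟩
      omega
    · push_neg at hex
      refine ⟨f, hf, fun w hw => ?_⟩
      rcases hKS.mem_or (f w) with hK | hS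
      · exact absurd hK (hex w hw)
      · exact hS

end CAG
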